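/- Let S = Q Λ Qᵀ with Λ having non-increasing diagonal, and fix Λ_o diagonal non-increasing and ε ≥ 0. Define Λ_ε* as the diagonal matrix with entries (Λ_ε*)_{ii} = sign(γ_i)·min{ε, |γ_i|} where γ_i = Λ_{ii} − (Λ_o)_{ii}. Then Λ_ε* minimizes ‖Λ − Λ_o − Λ_ε‖_F over diagonal Λ_ε with ‖Λ_ε‖₂ ≤ ε, and Q(Λ_o + Λ_ε*)Qᵀ is a best Frobenius-norm approximant of S in the set M_ε. -/

import Mathlib

open Matrix

noncomputable def frobNorm {N : ℕ} (A : Matrix (Fin N) (Fin N) ℝ) : ℝ :=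
  Real.sqrt (∑ i, ∑ j, (A i j) ^ 2)

/-! ### Auxiliary machinery -/

/-- The "clipped distance squared" cost function. -/
noncomputable def fc (ε t : ℝ) : ℝ := max (|t| - ε) 0 ^ 2

lemma fc_convex (ε : ℝ) : ConvexOn ℝ Set.univ (fc ε) := by
  have h1 : ConvexOn ℝ Set.univ (fun t : ℝ => |t| - ε) := by
    have h : ConvexOn ℝ Set.univ (fun t : ℝ => ‖t‖ - ε) := (convexOn_univ_norm (E := ℝ)).sub (concaveOn_const ε convex_univ)
    simpa [Real.norm_eq_abs, sub_eq_add_neg] using h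
  have h2 : ConvexOn ℝ Set.univ (fun t : ℝ => max (|t| - ε) 0) :=
    h1.sup (convexOn_const 0 convex_univ)
  exact h2.pow (n := 2) (fun x _ => le_max_right _ _)

lemma four_point {f : ℝ → ℝ} (hf : ConvexOn ℝ Set.univ f)
    {s x t : ℝ} (h1 : s ≤ x) (h2 : x ≤ t) :
    f x + f (s + t - x) ≤ f s + f t := by
  by_cases hst : s = t
  · have hx : x = s := le_antisymm (hst ▸ h2) h1
    subst hst
    rw [hx]
    simp
  · have hlt : s < t := lt_of_le_of_ne (h1.trans h2) hst
    have hden : (0:ℝ) < t - s := sub_pos.2 hlt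
    set a := (t - x) / (t - s) with ha
    have ha0 : 0 ≤ a := div_nonneg (sub_nonneg.2 h2) hden.le
    have ha1 : a ≤ 1 := (div_le_one hden).2 (by linarith)
    have hb0 : 0 ≤ 1 - a := by linarith
    have key : a * (t - s) = t - x := div_mul_cancel₀ _ (ne_of_gt hden)
    have hx : a * s + (1 - a) * t = x := by linear_combination -key
    have hy : (1 - a) * s + a * t = s + t - x := by linear_combination key
    have H1 := hf.2 (Set.mem_univ s) (Set.mem_univ t) ha0 hb0 (by ring)
    have H2 := hf.2 (Set.mem_univ s) (Set.mem_univ t) hb0 ha0 (by ring)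
    simp only [smul_eq_mul] at H1 H2
    rw [hx] at H1
    rw [hy] at H2
    linarith

lemma fc_le_sq {ε γ e : ℝ} (he : |e| ≤ ε) : fc ε γ ≤ (γ - e)^2 := by
  have h1 : max (|γ| - ε) 0 ≤ |γ - e| := by
    refine max_le ?_ (abs_nonneg _)
    have h3 := abs_sub_abs_le_abs_sub γ (γ - e)
    have h2 : γ - (γ - e) = e := by ring
    rw [h2] at h3
    linarith
  have h0 : (0:ℝ) ≤ max (|γ| - ε) 0 := le_max_right _ _
  calc fc ε γ = max (|γ| - ε) 0 ^ 2 := rfl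
    _ ≤ |γ - e| ^ 2 := by exact pow_le_pow_left₀ h0 h1 2
    _ = (γ - e)^2 := sq_abs _

lemma fc_eq_star {ε γ : ℝ} (hε : 0 ≤ ε) :
    (γ - Real.sign γ * min ε |γ|)^2 = fc ε γ := by
  unfold fc
  rcases lt_trichotomy γ 0 with h | h | h
  · rw [Real.sign_of_neg h, abs_of_neg h]
    rcases le_total ε (-γ) with h2 | h2
    · rw [min_eq_left h2, max_eq_left (by linarith)]
      ring
    · rw [min_eq_right h2, max_eq_right (by linarith)]
      ring_nf
  · subst h
    simp [Real.sign_zero, max_eq_right (by linarith : -ε ≤ (0:ℝ))]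
  · rw [Real.sign_of_pos h, abs_of_pos h]
    rcases le_total ε γ with h2 | h2
    · rw [min_eq_left h2, max_eq_left (by linarith)]
      ring
    · rw [min_eq_right h2, max_eq_right (by linarith)]
      ring_nf

/-! ### Potentials for the Monge inequality -/

noncomputable def pot (c : ℕ → ℕ → ℝ) (j : ℕ) : ℝ :=
  ∑ l ∈ Finset.range j, (c (l+1) (l+1) - c (l+1) l)

lemma pot_succ (c : ℕ → ℕ → ℝ) (n : ℕ) :
    pot c (n+1) = pot c n + (c (n+1) (n+1) - c (n+1) n) :=
  Finset.sum_range_succ _ n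

lemma pot_ineq {N : ℕ} (c : ℕ → ℕ → ℝ)
    (hM : ∀ i i' j j', i ≤ i' → j ≤ j' → i' < N → j' < N →
      c i j + c i' j' ≤ c i j' + c i' j)
    {i j : ℕ} (hi : i < N) (hj : j < N) :
    c i i + pot c j ≤ c i j + pot c i := by
  rcases le_total i j with hle | hle
  · have up : ∀ k, i + k < N → c i i + pot c (i + k) ≤ c i (i + k) + pot c i := by
      intro k
      induction k with
      | zero => intro _; simp
      | succ k ih =>
        intro h
        have IH := ih (by omega)
        have hMo := hM i (i+k+1) (i+k) (i+k+1) (by omega) (by omega) (by omega) (by omega)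
        rw [show i + (k+1) = (i+k)+1 by ring, pot_succ]
        linarith
    have := up (j - i) (by omega)
    rwa [show i + (j - i) = j by omega] at this
  · have down : ∀ k, k ≤ i → c i i + pot c (i - k) ≤ c i (i - k) + pot c i := by
      intro k
      induction k with
      | zero => intro _; simp
      | succ k ih =>
        intro h
        have IH := ih (by omega)
        set m := i - (k+1) with hm
        have h1 : i - k = m + 1 := by omega
        rw [h1, pot_succ] at IH
        have hMo := hM (m+1) i m (m+1) (by omega) (by omega) hi (by omega)
        linarith
    have := down (i - j) (by omega)
    rwa [show i - (i - j) = j by omega] at this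

/-- Key inequality: for an entrywise-nonnegative doubly stochastic `B` and a
Monge cost `c`, the diagonal matching is optimal. -/
lemma ds_key {N : ℕ} (B : Fin N → Fin N → ℝ) (c : ℕ → ℕ → ℝ)
    (hB0 : ∀ i j, 0 ≤ B i j)
    (hrow : ∀ i, ∑ j, B i j = 1) (hcol : ∀ j, ∑ i, B i j = 1)
    (hM : ∀ i i' j j', i ≤ i' → j ≤ j' → i' < N → j' < N →
      c i j + c i' j' ≤ c i j' + c i' j) :
    ∑ i : Fin N, c i i ≤ ∑ i : Fin N, ∑ j : Fin N, B i j * c i j := by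
  have key : ∀ i j : Fin N, c i i + pot c j - pot c i ≤ c i j := by
    intro i j
    have := pot_ineq c hM i.isLt j.isLt
    linarith
  have step1 : ∑ i : Fin N, ∑ j : Fin N, B i j * (c i i + pot c j - pot c i)
      ≤ ∑ i : Fin N, ∑ j : Fin N, B i j * c i j := by
    refine Finset.sum_le_sum fun i _ => Finset.sum_le_sum fun j _ => ?_
    exact mul_le_mul_of_nonneg_left (key i j) (hB0 i j)
  have expand : ∑ i : Fin N, ∑ j : Fin N, B i j * (c i i + pot c j - pot c i)
      = ∑ i : Fin N, c i i := by
    have inner : ∀ i : Fin N, ∑ j : Fin N, B i j * (c i i + pot c j - pot c i)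
        = (∑ j : Fin N, B i j * pot c j) + (c i i - pot c i) := by
      intro i
      have e1 : ∑ j : Fin N, B i j * (c i i + pot c j - pot c i)
          = ∑ j : Fin N, (B i j * pot c j + B i j * (c i i - pot c i)) :=
        Finset.sum_congr rfl fun j _ => by ring
      rw [e1, Finset.sum_add_distrib, ← Finset.sum_mul, hrow i, one_mul]
    calc ∑ i : Fin N, ∑ j : Fin N, B i j * (c i i + pot c j - pot c i)
        = ∑ i : Fin N, ((∑ j : Fin N, B i j * pot c j) + (c i i - pot c i)) :=
          Finset.sum_congr rfl fun i _ => inner i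
      _ = (∑ i : Fin N, ∑ j : Fin N, B i j * pot c j)
            + ∑ i : Fin N, (c i i - pot c i) := Finset.sum_add_distrib
      _ = (∑ j : Fin N, pot c j) + ∑ i : Fin N, (c i i - pot c i) := by
          rw [Finset.sum_comm]
          congr 1
          refine Finset.sum_congr rfl fun j _ => ?_
          rw [← Finset.sum_mul, hcol j, one_mul]
      _ = ∑ i : Fin N, c i i := by
          rw [Finset.sum_sub_distrib]
          ring
  linarith

/-! ### Matrix lemmas -/

lemma sq_eq_trace {N : ℕ} (A : Matrix (Fin N) (Fin N) ℝ) :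
    ∑ i, ∑ j, (A i j)^2 = Matrix.trace (Aᵀ * A) := by
  simp only [Matrix.trace, Matrix.diag, Matrix.mul_apply, Matrix.transpose_apply, pow_two]
  rw [Finset.sum_comm]

lemma sq_conj {N : ℕ} (U W A : Matrix (Fin N) (Fin N) ℝ)
    (hU : U * Uᵀ = 1) (hW : W * Wᵀ = 1) :
    ∑ i, ∑ j, ((Uᵀ * A * W) i j)^2 = ∑ i, ∑ j, (A i j)^2 := by
  rw [sq_eq_trace, sq_eq_trace]
  have h1 : (Uᵀ * A * W)ᵀ * (Uᵀ * A * W) = Wᵀ * (Aᵀ * (U * Uᵀ) * A) * W := by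
    simp only [Matrix.transpose_mul, Matrix.transpose_transpose, Matrix.mul_assoc]
  rw [h1, hU, Matrix.mul_one]
  rw [Matrix.trace_mul_cycle, ← Matrix.mul_assoc, hW, Matrix.one_mul]

lemma sq_diag {N : ℕ} (v : Fin N → ℝ) :
    ∑ i, ∑ j, ((Matrix.diagonal v) i j)^2 = ∑ i, (v i)^2 := by
  refine Finset.sum_congr rfl fun i _ => ?_
  simp [Matrix.diagonal_apply, apply_ite (· ^ 2)]

lemma orth_mul {N : ℕ} {Q : Matrix (Fin N) (Fin N) ℝ}
    (hQ : Q ∈ Matrix.orthogonalGroup (Fin N) ℝ) : Q * Qᵀ = 1 ∧ Qᵀ * Q = 1 := by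
  have h1 : Q * star Q = 1 := hQ.2
  have h2 : star Q * Q = 1 := hQ.1
  rw [Matrix.star_eq_conjTranspose, Matrix.conjTranspose_eq_transpose_of_trivial] at h1 h2
  exact ⟨h1, h2⟩

/-- Extension of a `Fin N`-indexed family to `ℕ`. -/
noncomputable def extF {N : ℕ} (d : Fin N → ℝ) : ℕ → ℝ :=
  fun n => if h : n < N then d ⟨n, h⟩ else 0

noncomputable def costC {N : ℕ} (ε : ℝ) (d Λo : Fin N → ℝ) : ℕ → ℕ → ℝ :=
  fun i j => fc ε (extF d i - extF Λo j)

lemma costC_fin {N : ℕ} (ε : ℝ) (d Λo : Fin N → ℝ) (i j : Fin N) :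
    costC ε d Λo i j = fc ε (d i - Λo j) := by
  simp [costC, extF, i.isLt, j.isLt]

lemma costC_monge {N : ℕ} (ε : ℝ) (d Λo : Fin N → ℝ)
    (hd : ∀ i j : Fin N, i ≤ j → d j ≤ d i)
    (hΛo : ∀ i j : Fin N, i ≤ j → Λo j ≤ Λo i) :
    ∀ i i' j j', i ≤ i' → j ≤ j' → i' < N → j' < N →
      costC ε d Λo i j + costC ε d Λo i' j' ≤ costC ε d Λo i j' + costC ε d Λo i' j := by
  intro i i' j j' hii hjj hi' hj'
  have hi : i < N := lt_of_le_of_lt hii hi'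
  have hj : j < N := lt_of_le_of_lt hjj hj'
  simp only [costC, extF, dif_pos hi, dif_pos hi', dif_pos hj, dif_pos hj']
  have hab : d ⟨i', hi'⟩ ≤ d ⟨i, hi⟩ := hd _ _ (by exact hii)
  have huv : Λo ⟨j', hj'⟩ ≤ Λo ⟨j, hj⟩ := hΛo _ _ (by exact hjj)
  have h4 := four_point (fc_convex ε)
    (s := d ⟨i', hi'⟩ - Λo ⟨j, hj⟩) (x := d ⟨i, hi⟩ - Λo ⟨j, hj⟩)
    (t := d ⟨i, hi⟩ - Λo ⟨j', hj'⟩) (by linarith) (by linarith)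
  have harg : d ⟨i', hi'⟩ - Λo ⟨j, hj⟩ + (d ⟨i, hi⟩ - Λo ⟨j', hj'⟩)
      - (d ⟨i, hi⟩ - Λo ⟨j, hj⟩) = d ⟨i', hi'⟩ - Λo ⟨j', hj'⟩ := by ring
  rw [harg] at h4
  linarith

/-! ### Main theorem -/

theorem best_approximant_uncertainty {N : ℕ}
    (d Λo : Fin N → ℝ)
    (hd : ∀ i j : Fin N, i ≤ j → d j ≤ d i)
    (hΛo : ∀ i j : Fin N, i ≤ j → Λo j ≤ Λo i)
    (ε : ℝ) (hε : 0 ≤ ε)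
    (Q : Matrix (Fin N) (Fin N) ℝ) (hQ : Q ∈ Matrix.orthogonalGroup (Fin N) ℝ)
    (S : Matrix (Fin N) (Fin N) ℝ) (hS : S = Q * Matrix.diagonal d * Qᵀ)
    (estar : Fin N → ℝ)
    (hestar : ∀ i, estar i = Real.sign (d i - Λo i) * min ε |d i - Λo i|) :
    (∀ e : Fin N → ℝ, (∀ i, |e i| ≤ ε) →
      frobNorm (Matrix.diagonal d - Matrix.diagonal Λo - Matrix.diagonal estar) ≤
        frobNorm (Matrix.diagonal d - Matrix.diagonal Λo - Matrix.diagonal e)) ∧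
    (∀ X ∈ {X : Matrix (Fin N) (Fin N) ℝ |
        ∃ V ∈ Matrix.orthogonalGroup (Fin N) ℝ, ∃ e : Fin N → ℝ,
          (∀ i, |e i| ≤ ε) ∧
          X = V * (Matrix.diagonal Λo + Matrix.diagonal e) * Vᵀ},
      frobNorm (S - Q * (Matrix.diagonal Λo + Matrix.diagonal estar) * Qᵀ) ≤
        frobNorm (S - X)) := by
  obtain ⟨hQ1, hQ2⟩ := orth_mul hQ
  -- the star diagonal entries realize the cost fc
  have hstar_sq : ∀ i : Fin N, (d i - Λo i - estar i)^2 = fc ε (d i - Λo i) := by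
    intro i
    rw [hestar i]
    exact fc_eq_star hε
  constructor
  · -- Part 1
    intro e he
    unfold frobNorm
    apply Real.sqrt_le_sqrt
    simp only [Matrix.diagonal_sub]
    rw [sq_diag, sq_diag]
    refine Finset.sum_le_sum fun i _ => ?_
    rw [hstar_sq i]
    exact fc_le_sq (he i)
  · -- Part 2
    intro X hX
    obtain ⟨V, hV, e, he, rfl⟩ := hX
    obtain ⟨hV1, hV2⟩ := orth_mul hV
    unfold frobNorm
    apply Real.sqrt_le_sqrt
    -- diagonal sums
    have hdiagadd : Matrix.diagonal Λo + Matrix.diagonal estar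
        = Matrix.diagonal (fun i => Λo i + estar i) := Matrix.diagonal_add _ _
    have hdiagadd' : Matrix.diagonal Λo + Matrix.diagonal e
        = Matrix.diagonal (fun i => Λo i + e i) := Matrix.diagonal_add _ _
    -- LHS value
    have hL : S - Q * (Matrix.diagonal Λo + Matrix.diagonal estar) * Qᵀ
        = Q * Matrix.diagonal (fun i => d i - (Λo i + estar i)) * Qᵀ := by
      rw [hS, hdiagadd, ← Matrix.sub_mul, ← Matrix.mul_sub, Matrix.diagonal_sub]
    have hLsum : ∑ i, ∑ j, ((S - Q * (Matrix.diagonal Λo + Matrix.diagonal estar) * Qᵀ) i j)^2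
        = ∑ i : Fin N, fc ε (d i - Λo i) := by
      rw [hL]
      rw [show Q * Matrix.diagonal (fun i => d i - (Λo i + estar i)) * Qᵀ
          = (Qᵀ)ᵀ * Matrix.diagonal (fun i => d i - (Λo i + estar i)) * Qᵀ by
        rw [Matrix.transpose_transpose]]
      rw [sq_conj Qᵀ Qᵀ _ (by rwa [Matrix.transpose_transpose])
        (by rwa [Matrix.transpose_transpose])]
      rw [sq_diag]
      refine Finset.sum_congr rfl fun i _ => ?_
      rw [show d i - (Λo i + estar i) = d i - Λo i - estar i by ring, hstar_sq i]
    -- RHS value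
    set P : Matrix (Fin N) (Fin N) ℝ := Qᵀ * V with hP
    have hP1 : P * Pᵀ = 1 := by
      rw [hP, Matrix.transpose_mul, Matrix.transpose_transpose]
      rw [show Qᵀ * V * (Vᵀ * Q) = Qᵀ * (V * Vᵀ) * Q by simp only [Matrix.mul_assoc]]
      rw [hV1, Matrix.mul_one, hQ2]
    have hP2 : Pᵀ * P = 1 := by
      rw [hP, Matrix.transpose_mul, Matrix.transpose_transpose]
      rw [show Vᵀ * Q * (Qᵀ * V) = Vᵀ * (Q * Qᵀ) * V by simp only [Matrix.mul_assoc]]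
      rw [hQ1, Matrix.mul_one, hV2]
    have hQSXV : Qᵀ * (S - V * (Matrix.diagonal Λo + Matrix.diagonal e) * Vᵀ) * V
        = Matrix.diagonal d * P - P * Matrix.diagonal (fun j => Λo j + e j) := by
      rw [hS, hdiagadd', Matrix.mul_sub, Matrix.sub_mul]
      congr 1
      · rw [show Qᵀ * (Q * Matrix.diagonal d * Qᵀ) * V
            = (Qᵀ * Q) * (Matrix.diagonal d * (Qᵀ * V)) by simp only [Matrix.mul_assoc]]
        rw [hQ2, Matrix.one_mul]
      · rw [show Qᵀ * (V * Matrix.diagonal (fun j => Λo j + e j) * Vᵀ) * V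
            = (Qᵀ * V) * Matrix.diagonal (fun j => Λo j + e j) * (Vᵀ * V) by simp only [Matrix.mul_assoc]]
        rw [hV2, Matrix.mul_one, hP]
    have hRsum : ∑ i, ∑ j, ((S - V * (Matrix.diagonal Λo + Matrix.diagonal e) * Vᵀ) i j)^2
        = ∑ i : Fin N, ∑ j : Fin N, (P i j)^2 * (d i - Λo j - e j)^2 := by
      rw [← sq_conj Q V _ hQ1 hV1, hQSXV]
      refine Finset.sum_congr rfl fun i _ => Finset.sum_congr rfl fun j _ => ?_
      simp only [Matrix.sub_apply, Matrix.diagonal_mul, Matrix.mul_diagonal]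
      ring
    rw [hLsum, hRsum]
    -- doubly stochastic argument
    have hB0 : ∀ i j : Fin N, 0 ≤ (P i j)^2 := fun i j => sq_nonneg _
    have hrow : ∀ i : Fin N, ∑ j, (P i j)^2 = 1 := by
      intro i
      calc ∑ j, (P i j)^2 = ∑ j, P i j * Pᵀ j i := by
            refine Finset.sum_congr rfl fun j _ => ?_
            rw [Matrix.transpose_apply, pow_two]
        _ = (P * Pᵀ) i i := (Matrix.mul_apply).symm
        _ = 1 := by rw [hP1]; exact Matrix.one_apply_eq i
    have hcol : ∀ j : Fin N, ∑ i, (P i j)^2 = 1 := by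
      intro j
      calc ∑ i, (P i j)^2 = ∑ i, Pᵀ j i * P i j := by
            refine Finset.sum_congr rfl fun i _ => ?_
            rw [Matrix.transpose_apply, pow_two]
        _ = (Pᵀ * P) j j := (Matrix.mul_apply).symm
        _ = 1 := by rw [hP2]; exact Matrix.one_apply_eq j
    have hchain : ∑ i : Fin N, fc ε (d i - Λo i)
        ≤ ∑ i : Fin N, ∑ j : Fin N, (P i j)^2 * (d i - Λo j - e j)^2 := by
      calc ∑ i : Fin N, fc ε (d i - Λo i)
          = ∑ i : Fin N, costC ε d Λo i i :=
            Finset.sum_congr rfl fun i _ => (costC_fin ε d Λo i i).symm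
        _ ≤ ∑ i : Fin N, ∑ j : Fin N, (P i j)^2 * costC ε d Λo i j :=
            ds_key _ _ hB0 hrow hcol (costC_monge ε d Λo hd hΛo)
        _ ≤ ∑ i : Fin N, ∑ j : Fin N, (P i j)^2 * (d i - Λo j - e j)^2 := by
            refine Finset.sum_le_sum fun i _ => Finset.sum_le_sum fun j _ => ?_
            refine mul_le_mul_of_nonneg_left ?_ (hB0 i j)
            rw [costC_fin]
            exact fc_le_sq (he j)
    exact hchain
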